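/- Under the veto rule, the probability that c is a co-winner equals Σ_{b=0}^{n} Pr[b(T',c) = b] · Π_{c' ≠ c} Pr[b(T',c') ≥ b], where b(T',x) is the number of participating voters who rank x last; this holds because the bottom-counts of distinct candidates are probabilistically independent. -/
import Mathlib


noncomputable def subsetPr {n : ℕ} (p : Fin n → ℝ) (U : Finset (Fin n)) : ℝ :=
  (∏ i ∈ U, p i) * ∏ i ∈ Uᶜ, (1 - p i)

open Classical in
noncomputable def prEvent {n : ℕ} (p : Fin n → ℝ) (E : Finset (Fin n) → Prop) : ℝ :=
  ∑ U ∈ Finset.univ.filter E, subsetPr p U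

open Classical Finset

lemma prEvent_eq_sum {n : ℕ} (p : Fin n → ℝ) (E : Finset (Fin n) → Prop) :
    prEvent p E = ∑ U : Finset (Fin n), if E U then subsetPr p U else 0 := by
  rw [prEvent, sum_filter]

lemma prEvent_congr {n : ℕ} (p : Fin n → ℝ) {E F : Finset (Fin n) → Prop}
    (h : ∀ U, E U ↔ F U) : prEvent p E = prEvent p F := by
  rw [prEvent_eq_sum, prEvent_eq_sum]
  exact Finset.sum_congr rfl (fun U _ => by simp [h U])

lemma sum_split {n : ℕ} (S : Finset (Fin n)) (g : Finset (Fin n) → ℝ) :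
    ∑ U : Finset (Fin n), g U
      = ∑ W ∈ S.powerset, ∑ V ∈ Sᶜ.powerset, g (W ∪ V) := by
  have hid : ∀ U : Finset (Fin n), (U ∩ S) ∪ (U \ S) = U := by
    intro U; ext i; by_cases h : i ∈ S <;> simp [h]
  rw [← Finset.sum_product']
  refine Finset.sum_nbij' (fun U => (U ∩ S, U \ S)) (fun q => q.1 ∪ q.2) ?_ ?_ ?_ ?_ ?_
  · intro U _
    simp only [mem_product, mem_powerset]
    refine ⟨inter_subset_right, ?_⟩
    intro i hi
    simp only [mem_sdiff] at hi
    simp [mem_compl, hi.2]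
  · intro q _; simp
  · intro U _; exact hid U
  · intro q hq
    simp only [mem_product, mem_powerset] at hq
    obtain ⟨h1, h2⟩ := hq
    have e1 : (q.1 ∪ q.2) ∩ S = q.1 := by
      ext i
      simp only [mem_inter, mem_union]
      constructor
      · rintro ⟨h | h, hS⟩
        · exact h
        · exact absurd (h2 h) (by simp [mem_compl, hS])
      · intro h; exact ⟨Or.inl h, h1 h⟩
    have e2 : (q.1 ∪ q.2) \ S = q.2 := by
      ext i
      simp only [mem_sdiff, mem_union]
      constructor
      · rintro ⟨h | h, hS⟩
        · exact absurd (h1 h) hS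
        · exact h
      · intro h
        have := h2 h
        simp only [mem_compl] at this
        exact ⟨Or.inr h, this⟩
    simp only [e1, e2]
  · intro U _; rw [hid U]

lemma w_total {n : ℕ} (p : Fin n → ℝ) (S : Finset (Fin n)) :
    ∑ W ∈ S.powerset, (∏ i ∈ W, p i) * ∏ i ∈ S \ W, (1 - p i) = 1 := by
  rw [← Finset.prod_add]
  simp

lemma subsetPr_union {n : ℕ} (p : Fin n → ℝ) (S W V : Finset (Fin n))
    (hW : W ⊆ S) (hV : V ⊆ Sᶜ) :
    subsetPr p (W ∪ V)
      = ((∏ i ∈ W, p i) * ∏ i ∈ S \ W, (1 - p i))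
        * ((∏ i ∈ V, p i) * ∏ i ∈ Sᶜ \ V, (1 - p i)) := by
  have hdisj : Disjoint W V := by
    refine Finset.disjoint_left.2 (fun i hi hiV => ?_)
    have := hV hiV; simp only [mem_compl] at this; exact this (hW hi)
  have hc : (W ∪ V)ᶜ = (S \ W) ∪ (Sᶜ \ V) := by
    ext i
    simp only [mem_compl, mem_union, mem_sdiff]
    by_cases hS : i ∈ S
    · constructor
      · intro h; push_neg at h; exact Or.inl ⟨hS, h.1⟩
      · rintro (⟨_, h⟩ | ⟨h, _⟩)
        · push_neg; exact ⟨h, fun hiV => (Finset.mem_compl.1 (hV hiV)) hS⟩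
        · exact absurd hS h
    · constructor
      · intro h; push_neg at h; exact Or.inr ⟨by simp [mem_compl, hS], h.2⟩
      · rintro (⟨h, _⟩ | ⟨_, h⟩)
        · exact absurd h hS
        · push_neg; exact ⟨fun hiW => hS (hW hiW), h⟩
  have hdisj2 : Disjoint (S \ W) (Sᶜ \ V) := by
    refine Finset.disjoint_left.2 (fun i hi hi2 => ?_)
    simp only [mem_sdiff, mem_compl] at hi hi2
    exact hi2.1 hi.1
  rw [subsetPr, Finset.prod_union hdisj, hc, Finset.prod_union hdisj2]
  ring

lemma prEvent_and {n : ℕ} (p : Fin n → ℝ) (S : Finset (Fin n))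
    (E F : Finset (Fin n) → Prop)
    (hE : ∀ W V, W ⊆ S → V ⊆ Sᶜ → (E (W ∪ V) ↔ E W))
    (hF : ∀ W V, W ⊆ S → V ⊆ Sᶜ → (F (W ∪ V) ↔ F V)) :
    prEvent p (fun U => E U ∧ F U) = prEvent p E * prEvent p F := by
  have key : ∀ (G : Finset (Fin n) → Prop),
      prEvent p G = ∑ W ∈ S.powerset, ∑ V ∈ Sᶜ.powerset,
        (if G (W ∪ V) then subsetPr p (W ∪ V) else 0) := by
    intro G; rw [prEvent_eq_sum, sum_split S]
  have hA : prEvent p E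
      = ∑ W ∈ S.powerset, (if E W then (∏ i ∈ W, p i) * ∏ i ∈ S \ W, (1 - p i) else 0) := by
    rw [key]
    refine Finset.sum_congr rfl fun W hW => ?_
    simp only [mem_powerset] at hW
    have : ∀ V ∈ Sᶜ.powerset, (if E (W ∪ V) then subsetPr p (W ∪ V) else 0)
        = (if E W then (∏ i ∈ W, p i) * ∏ i ∈ S \ W, (1 - p i) else 0)
          * ((∏ i ∈ V, p i) * ∏ i ∈ Sᶜ \ V, (1 - p i)) := by
      intro V hV
      simp only [mem_powerset] at hV
      rw [hE W V hW hV, subsetPr_union p S W V hW hV]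
      by_cases h1 : E W
      · simp [h1]
      · simp [h1]
    rw [Finset.sum_congr rfl this, ← Finset.mul_sum, w_total p Sᶜ, mul_one]
  have hB : prEvent p F
      = ∑ V ∈ Sᶜ.powerset, (if F V then (∏ i ∈ V, p i) * ∏ i ∈ Sᶜ \ V, (1 - p i) else 0) := by
    rw [key]
    have : ∀ W ∈ S.powerset, ∀ V ∈ Sᶜ.powerset, (if F (W ∪ V) then subsetPr p (W ∪ V) else 0)
        = ((∏ i ∈ W, p i) * ∏ i ∈ S \ W, (1 - p i))
          * (if F V then (∏ i ∈ V, p i) * ∏ i ∈ Sᶜ \ V, (1 - p i) else 0) := by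
      intro W hW V hV
      simp only [mem_powerset] at hW hV
      rw [hF W V hW hV, subsetPr_union p S W V hW hV]
      by_cases h1 : F V
      · simp [h1]
      · simp [h1]
    rw [show (∑ V ∈ Sᶜ.powerset, (if F V then (∏ i ∈ V, p i) * ∏ i ∈ Sᶜ \ V, (1 - p i) else 0))
        = (∑ W ∈ S.powerset, (∏ i ∈ W, p i) * ∏ i ∈ S \ W, (1 - p i))
          * (∑ V ∈ Sᶜ.powerset, (if F V then (∏ i ∈ V, p i) * ∏ i ∈ Sᶜ \ V, (1 - p i) else 0))
        from by rw [w_total p S, one_mul]]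
    rw [Finset.sum_mul_sum]
    exact Finset.sum_congr rfl (fun W hW => Finset.sum_congr rfl (this W hW))
  have hC : prEvent p (fun U => E U ∧ F U)
      = (∑ W ∈ S.powerset, (if E W then (∏ i ∈ W, p i) * ∏ i ∈ S \ W, (1 - p i) else 0))
        * (∑ V ∈ Sᶜ.powerset, (if F V then (∏ i ∈ V, p i) * ∏ i ∈ Sᶜ \ V, (1 - p i) else 0)) := by
    rw [key]
    have : ∀ W ∈ S.powerset, ∀ V ∈ Sᶜ.powerset,
        (@ite ℝ (E (W ∪ V) ∧ F (W ∪ V)) (propDecidable _) (subsetPr p (W ∪ V)) 0)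
        = (if E W then (∏ i ∈ W, p i) * ∏ i ∈ S \ W, (1 - p i) else 0)
          * (if F V then (∏ i ∈ V, p i) * ∏ i ∈ Sᶜ \ V, (1 - p i) else 0) := by
      intro W hW V hV
      simp only [mem_powerset] at hW hV
      have : (E (W ∪ V) ∧ F (W ∪ V)) ↔ (E W ∧ F V) := by
        rw [hE W V hW hV, hF W V hW hV]
      simp only [this]
      rw [subsetPr_union p S W V hW hV]
      by_cases h1 : E W <;> by_cases h2 : F V <;> simp [h1, h2]
    rw [Finset.sum_mul_sum]
    exact Finset.sum_congr rfl (fun W hW => Finset.sum_congr rfl (this W hW))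
  rw [hA, hB, hC]

/-- The bottom count of candidate `x` when the participating voters are `U`;
`lastC i` is the candidate ranked last by voter `i`. -/
def bCount {n m : ℕ} (lastC : Fin n → Fin m) (U : Finset (Fin n)) (x : Fin m) : ℕ :=
  (U.filter (fun i => lastC i = x)).card

lemma prEvent_true {n : ℕ} (p : Fin n → ℝ) :
    prEvent p (fun _ => True) = 1 := by
  rw [prEvent_eq_sum]
  simp only [if_true]
  have : ∀ U : Finset (Fin n), subsetPr p U
      = (∏ i ∈ U, p i) * ∏ i ∈ univ \ U, (1 - p i) := by
    intro U; rw [subsetPr, compl_eq_univ_sdiff]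
  rw [Finset.sum_congr rfl (fun U _ => this U), ← Finset.powerset_univ, w_total]

lemma bCount_union_left {n m : ℕ} (lastC : Fin n → Fin m) (a : Fin m)
    (W V : Finset (Fin n)) (hV : V ⊆ (univ.filter (fun i => lastC i = a))ᶜ) :
    bCount lastC (W ∪ V) a = bCount lastC W a := by
  unfold bCount
  congr 1
  rw [Finset.filter_union]
  have : V.filter (fun i => lastC i = a) = ∅ := by
    rw [Finset.filter_eq_empty_iff]
    intro i hi h
    have := hV hi
    simp only [mem_compl, mem_filter, mem_univ, true_and] at this
    exact this h
  rw [this, union_empty]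

lemma bCount_union_right {n m : ℕ} (lastC : Fin n → Fin m) (a x : Fin m) (hx : x ≠ a)
    (W V : Finset (Fin n)) (hW : W ⊆ univ.filter (fun i => lastC i = a)) :
    bCount lastC (W ∪ V) x = bCount lastC V x := by
  unfold bCount
  congr 1
  rw [Finset.filter_union]
  have : W.filter (fun i => lastC i = x) = ∅ := by
    rw [Finset.filter_eq_empty_iff]
    intro i hi h
    have := hW hi
    simp only [mem_filter, mem_univ, true_and] at this
    exact hx (h ▸ this ▸ rfl)
  rw [this, empty_union]

lemma prEvent_indep {n m : ℕ} (p : Fin n → ℝ) (lastC : Fin n → Fin m)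
    (T : Finset (Fin m)) (Q : Fin m → ℕ → Prop) :
    prEvent p (fun U => ∀ x ∈ T, Q x (bCount lastC U x))
      = ∏ x ∈ T, prEvent p (fun U => Q x (bCount lastC U x)) := by
  induction T using Finset.induction_on with
  | empty =>
      simp only [Finset.notMem_empty, false_implies, implies_true, Finset.prod_empty]
      exact prEvent_true p
  | @insert a T ha ih =>
      have step : prEvent p (fun U => ∀ x ∈ insert a T, Q x (bCount lastC U x))
          = prEvent p (fun U => Q a (bCount lastC U a)
              ∧ ∀ x ∈ T, Q x (bCount lastC U x)) := by
        refine prEvent_congr p (fun U => ?_)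
        simp [Finset.forall_mem_insert]
      rw [step, Finset.prod_insert ha, ← ih]
      refine prEvent_and p (univ.filter (fun i => lastC i = a)) _ _ ?_ ?_
      · intro W V hW hV
        rw [bCount_union_left lastC a W V hV]
      · intro W V hW hV
        constructor
        · intro h x hx
          rw [← bCount_union_right lastC a x (fun hxa => ha (hxa ▸ hx)) W V hW]
          exact h x hx
        · intro h x hx
          rw [bCount_union_right lastC a x (fun hxa => ha (hxa ▸ hx)) W V hW]
          exact h x hx

/-- Under veto with independent voters, the probability that `c` is a co-winner (its
bottom count is minimal) equals `∑_{b=0}^{n} Pr[b(T',c) = b] · ∏_{c' ≠ c} Pr[b(T',c') ≥ b]`,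
since the bottom counts of distinct candidates are independent. -/
theorem veto_win_prob (n m : ℕ) (p : Fin n → ℝ) (hp : ∀ i, 0 ≤ p i ∧ p i ≤ 1)
    (lastC : Fin n → Fin m) (c : Fin m) :
    prEvent p (fun U => ∀ x, bCount lastC U c ≤ bCount lastC U x)
      = ∑ b ∈ Finset.range (n + 1),
          prEvent p (fun U => bCount lastC U c = b)
            * ∏ x ∈ Finset.univ.erase c,
                prEvent p (fun U => b ≤ bCount lastC U x) := by
  have hbd : ∀ U : Finset (Fin n), bCount lastC U c ∈ Finset.range (n + 1) := by
    intro U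
    rw [Finset.mem_range, Nat.lt_succ_iff]
    calc bCount lastC U c ≤ U.card := Finset.card_filter_le _ _
      _ ≤ (univ : Finset (Fin n)).card := Finset.card_le_univ U
      _ = n := by simp
  have step1 : prEvent p (fun U => ∀ x, bCount lastC U c ≤ bCount lastC U x)
      = ∑ b ∈ Finset.range (n + 1),
          prEvent p (fun U => bCount lastC U c = b ∧ ∀ x, b ≤ bCount lastC U x) := by
    rw [prEvent_eq_sum]
    rw [Finset.sum_congr rfl (fun b (_ : b ∈ Finset.range (n+1)) => prEvent_eq_sum p
      (fun U => bCount lastC U c = b ∧ ∀ x, b ≤ bCount lastC U x))]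
    rw [Finset.sum_comm]
    refine Finset.sum_congr rfl (fun U _ => ?_)
    rw [Finset.sum_eq_single_of_mem (bCount lastC U c) (hbd U)
      (fun b _ hb => by
        simp only [ite_eq_right_iff, and_imp]
        intro h _; exact absurd h.symm hb)]
    simp only [eq_self_iff_true, true_and]
    congr
  rw [step1]
  refine Finset.sum_congr rfl (fun b _ => ?_)
  have step2 : prEvent p (fun U => bCount lastC U c = b ∧ ∀ x, b ≤ bCount lastC U x)
      = prEvent p (fun U => ∀ x ∈ (univ : Finset (Fin m)),
          (if x = c then bCount lastC U x = b else b ≤ bCount lastC U x)) := by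
    refine prEvent_congr p (fun U => ?_)
    constructor
    · rintro ⟨h1, h2⟩ x _
      by_cases hx : x = c
      · simp [hx, h1]
      · simp [hx, h2 x]
    · intro h
      have hc := h c (mem_univ c)
      simp only [if_pos rfl] at hc
      refine ⟨hc, fun x => ?_⟩
      by_cases hx : x = c
      · rw [hx, hc]
      · have := h x (mem_univ x)
        simpa [hx] using this
  rw [step2, prEvent_indep p lastC univ (fun x k => if x = c then k = b else b ≤ k)]
  rw [← Finset.mul_prod_erase (univ : Finset (Fin m)) _ (mem_univ c)]
  congr 1
  · refine prEvent_congr p (fun U => ?_)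
    simp
  · refine Finset.prod_congr rfl (fun x hx => ?_)
    have hxc : x ≠ c := (Finset.mem_erase.1 hx).1
    refine prEvent_congr p (fun U => ?_)
    simp [hxc]
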